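/- Let B₁, B₂ be bounded operators on H satisfying ‖[B₁, B₂(a)]‖ ≤ c·D_κ(a) for all a ∈ ℝ⁴. Let χ : ℝ⁴ → ℂ be measurable with |χ(x)| ≤ C·(λ + |x|)^{−r} for all x, where r ≥ 4 + κ and |x| is the Euclidean norm on ℝ⁴. Then there exists a constant c' such that ‖[B₁, (B₂(χ))(a)]‖ ≤ c'·D_κ(a) for all a ∈ ℝ⁴, i.e. the commutator of B₁ with the smeared operator B₂(χ) is again of κ-type. -/

import Mathlib

noncomputable section

open ContinuousLinearMap MeasureTheory

/-- Minkowski space modeled as `ℝ⁴` with the Euclidean structure. -/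
abbrev M4 : Type := EuclideanSpace ℝ (Fin 4)

/-- Euclidean norm of the spatial part `a⃗` of `a ∈ ℝ⁴`. -/
def snorm3 (a : M4) : ℝ := Real.sqrt ((a 1) ^ 2 + (a 2) ^ 2 + (a 3) ^ 2)

/-- The commutator-bounding function `D_κ` (with length parameter `lam`). -/
def Dkappa (lam κ : ℝ) (a : M4) : ℝ :=
  if (snorm3 a) ^ 2 ≤ (a 0) ^ 2 then 1
  else lam ^ κ / (lam + snorm3 a - |a 0|) ^ κ

def spart (a : M4) : EuclideanSpace ℝ (Fin 3) :=
  (WithLp.equiv 2 (Fin 3 → ℝ)).symm (fun i => a i.succ)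

lemma snorm3_eq (a : M4) : snorm3 a = ‖spart a‖ := by
  rw [EuclideanSpace.norm_eq]
  unfold snorm3
  congr 1
  rw [Fin.sum_univ_three]
  simp only [spart, Real.norm_eq_abs, sq_abs]
  rfl

lemma snorm3_nonneg (a : M4) : 0 ≤ snorm3 a := Real.sqrt_nonneg _

lemma snorm3_neg (a : M4) : snorm3 (-a) = snorm3 a := by
  simp [snorm3]

lemma snorm3_add_le (a b : M4) : snorm3 (a + b) ≤ snorm3 a + snorm3 b := by
  rw [snorm3_eq, snorm3_eq, snorm3_eq]
  have : spart (a + b) = spart a + spart b := rfl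
  rw [this]
  exact norm_add_le _ _

lemma snorm3_le_norm (a : M4) : snorm3 a ≤ ‖a‖ := by
  rw [EuclideanSpace.norm_eq]
  apply Real.sqrt_le_sqrt
  simp only [Fin.sum_univ_four, Real.norm_eq_abs, sq_abs]
  nlinarith [sq_nonneg (a 0)]

lemma abs_c0_le_norm (a : M4) : |a 0| ≤ ‖a‖ := by
  rw [EuclideanSpace.norm_eq, ← Real.sqrt_sq_eq_abs]
  apply Real.sqrt_le_sqrt
  simp only [Fin.sum_univ_four, Real.norm_eq_abs, sq_abs]
  nlinarith [sq_nonneg (a 1), sq_nonneg (a 2), sq_nonneg (a 3)]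

/-- the "distance above the cone" -/
def gD (a : M4) : ℝ := max (snorm3 a - |a 0|) 0

lemma gD_nonneg (a : M4) : 0 ≤ gD a := le_max_right _ _

lemma fD_pos {lam : ℝ} (hlam : 0 < lam) (a : M4) : 0 < lam + gD a :=
  lt_of_lt_of_le hlam (le_add_of_nonneg_right (gD_nonneg a))

lemma Dkappa_eq {lam : ℝ} (κ : ℝ) (hlam : 0 < lam) (a : M4) :
    Dkappa lam κ a = (lam / (lam + gD a)) ^ κ := by
  unfold Dkappa
  by_cases h : (snorm3 a) ^ 2 ≤ (a 0) ^ 2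
  · have hle : snorm3 a ≤ |a 0| := by
      have h2 := Real.sqrt_le_sqrt h
      rwa [Real.sqrt_sq (snorm3_nonneg a), Real.sqrt_sq_eq_abs] at h2
    rw [if_pos h]
    have : gD a = 0 := max_eq_right (sub_nonpos.2 hle)
    rw [this, add_zero, div_self hlam.ne', Real.one_rpow]
  · have hlt : |a 0| < snorm3 a := by
      by_contra hcon
      push_neg at hcon
      exact h (by nlinarith [sq_abs (a 0), snorm3_nonneg a])
    rw [if_neg h]
    have : gD a = snorm3 a - |a 0| := max_eq_left (by linarith)
    rw [this, Real.div_rpow hlam.le (by linarith), add_sub_assoc]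

lemma gD_lip (a x : M4) : gD a ≤ gD (x + a) + 2 * ‖x‖ := by
  rcases le_or_gt (snorm3 a - |a 0|) 0 with h | h
  · have : gD a = 0 := max_eq_right h
    rw [this]
    have := gD_nonneg (x + a)
    have := norm_nonneg x
    linarith
  · have hga : gD a = snorm3 a - |a 0| := max_eq_left h.le
    rw [hga]
    have h1 : snorm3 a ≤ snorm3 (x + a) + ‖x‖ := by
      have := snorm3_add_le (x + a) (-x)
      simp only [add_neg_cancel_comm] at this
      calc snorm3 a = snorm3 (x + a + -x) := by rw [add_neg_cancel_comm]
        _ ≤ snorm3 (x + a) + snorm3 (-x) := snorm3_add_le _ _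
        _ ≤ snorm3 (x + a) + ‖x‖ := by
            rw [snorm3_neg]; exact add_le_add_right (snorm3_le_norm x) _
    have h2 : |(x + a) 0| ≤ |x 0| + |a 0| := by
      have : (x + a) 0 = x 0 + a 0 := rfl
      rw [this]; exact abs_add_le _ _
    have h3 : |x 0| ≤ ‖x‖ := abs_c0_le_norm x
    have h4 : snorm3 (x + a) - |(x + a) 0| ≤ gD (x + a) := le_max_left _ _
    nlinarith

lemma Dkappa_nonneg {lam κ : ℝ} (hlam : 0 < lam) (a : M4) : 0 ≤ Dkappa lam κ a := by
  rw [Dkappa_eq κ hlam]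
  exact Real.rpow_nonneg (div_nonneg hlam.le (fD_pos hlam a).le) κ

lemma Dkappa_le_one {lam κ : ℝ} (hlam : 0 < lam) (hκ : 0 < κ) (a : M4) :
    Dkappa lam κ a ≤ 1 := by
  rw [Dkappa_eq κ hlam]
  apply Real.rpow_le_one (div_nonneg hlam.le (fD_pos hlam a).le) _ hκ.le
  rw [div_le_one (fD_pos hlam a)]
  linarith [gD_nonneg a]

lemma Dkappa_pos {lam κ : ℝ} (hlam : 0 < lam) (a : M4) : 0 < Dkappa lam κ a := by
  rw [Dkappa_eq κ hlam]
  exact Real.rpow_pos_of_pos (div_pos hlam (fD_pos hlam a)) κ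

/-- near the point `a`, `Dkappa` decreases at most by the factor `2^κ`. -/
lemma Dkappa_smallx {lam κ : ℝ} (hlam : 0 < lam) (hκ : 0 < κ) (a x : M4)
    (hx : ‖x‖ ≤ (lam + gD a) / 4) :
    Dkappa lam κ (x + a) ≤ 2 ^ κ * Dkappa lam κ a := by
  rw [Dkappa_eq κ hlam, Dkappa_eq κ hlam]
  set t := lam + gD a with ht
  have htpos : 0 < t := fD_pos hlam a
  have h1 : t / 2 ≤ lam + gD (x + a) := by
    have := gD_lip a x
    have : gD a - 2 * ‖x‖ ≤ gD (x + a) := by linarith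
    nlinarith
  have h2 : lam / (lam + gD (x + a)) ≤ lam / (t / 2) :=
    div_le_div_of_nonneg_left hlam.le (by linarith) h1
  calc (lam / (lam + gD (x + a))) ^ κ ≤ (lam / (t / 2)) ^ κ := by
        apply Real.rpow_le_rpow (div_nonneg hlam.le (fD_pos hlam (x + a)).le) h2 hκ.le
    _ = (2 * (lam / t)) ^ κ := by rw [div_div_eq_mul_div]; ring_nf
    _ = 2 ^ κ * (lam / t) ^ κ := Real.mul_rpow (by norm_num) (div_nonneg hlam.le htpos.le)

lemma cont_base (lam s : ℝ) (hlam : 0 < lam) :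
    Continuous fun x : M4 => (lam + ‖x‖) ^ (-s) :=
  (continuous_const.add continuous_norm).rpow_const
    (fun x => Or.inl (add_pos_of_pos_of_nonneg hlam (norm_nonneg x)).ne')

lemma integrable_pow {lam : ℝ} (hlam : 0 < lam) {s : ℝ} (hs : 4 < s) :
    Integrable (fun x : M4 => (lam + ‖x‖) ^ (-s)) := by
  have hd : (Module.finrank ℝ M4 : ℝ) < s := by
    rw [finrank_euclideanSpace_fin]; exact_mod_cast hs
  have hm : 0 < min lam 1 := lt_min hlam one_pos
  refine ((integrable_one_add_norm hd).const_mul ((min lam 1) ^ (-s))).mono'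
    ((cont_base lam s hlam).aestronglyMeasurable) ?_
  filter_upwards with x
  have h1 : 0 < lam + ‖x‖ := by positivity
  have h2 : min lam 1 * (1 + ‖x‖) ≤ lam + ‖x‖ := by
    have ha : min lam 1 ≤ lam := min_le_left _ _
    have hb : min lam 1 ≤ 1 := min_le_right _ _
    nlinarith [norm_nonneg x]
  have h3 : (lam + ‖x‖) ^ (-s) ≤ (min lam 1 * (1 + ‖x‖)) ^ (-s) :=
    Real.rpow_le_rpow_of_nonpos (by positivity) h2 (by linarith)
  rw [Real.norm_eq_abs, abs_of_nonneg (Real.rpow_nonneg h1.le _)]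
  calc (lam + ‖x‖) ^ (-s) ≤ (min lam 1 * (1 + ‖x‖)) ^ (-s) := h3
    _ = (min lam 1) ^ (-s) * (1 + ‖x‖) ^ (-s) :=
        Real.mul_rpow hm.le (by positivity)

def tailf (s R : ℝ) (x : M4) : ℝ := if R ≤ ‖x‖ then ‖x‖ ^ (-s) else 0

lemma tailf_nonneg (s R : ℝ) (x : M4) : 0 ≤ tailf s R x := by
  unfold tailf
  split
  · exact Real.rpow_nonneg (norm_nonneg x) _
  · exact le_rfl

lemma tailf_measurable (s R : ℝ) : Measurable (tailf s R) := by
  unfold tailf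
  exact Measurable.ite (measurableSet_le measurable_const measurable_norm)
    (by fun_prop) measurable_const

lemma tailf_integrable {s : ℝ} (hs : 4 < s) {R : ℝ} (hR : 0 < R) :
    Integrable (tailf s R) := by
  have hd : (Module.finrank ℝ M4 : ℝ) < s := by
    rw [finrank_euclideanSpace_fin]; exact_mod_cast hs
  refine ((integrable_one_add_norm hd).const_mul ((R / (R + 1)) ^ (-s))).mono'
    (tailf_measurable s R).aestronglyMeasurable ?_
  filter_upwards with x
  rw [Real.norm_eq_abs, abs_of_nonneg (tailf_nonneg s R x)]
  unfold tailf
  split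
  · rename_i hx
    have h0 : 0 < ‖x‖ := lt_of_lt_of_le hR hx
    have h2 : R / (R + 1) * (1 + ‖x‖) ≤ ‖x‖ := by
      rw [div_mul_eq_mul_div, div_le_iff₀ (by linarith)]
      nlinarith
    calc ‖x‖ ^ (-s) ≤ (R / (R + 1) * (1 + ‖x‖)) ^ (-s) :=
          Real.rpow_le_rpow_of_nonpos (by positivity) h2 (by linarith)
      _ = (R / (R + 1)) ^ (-s) * (1 + ‖x‖) ^ (-s) :=
          Real.mul_rpow (by positivity) (by positivity)
  · positivity

lemma tailf_scale (s : ℝ) {R : ℝ} (hR : 0 < R) :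
    ∫ x : M4, tailf s R x
      = R ^ (4 : ℝ) * R ^ (-s) * ∫ x : M4, tailf s 1 x := by
  have h := MeasureTheory.Measure.integral_comp_inv_smul_of_nonneg
    (volume : Measure M4) (tailf s 1) hR.le
  have heq : ∀ x : M4, tailf s 1 (R⁻¹ • x) = R ^ s * tailf s R x := by
    intro x
    have hn : ‖R⁻¹ • x‖ = R⁻¹ * ‖x‖ := by
      rw [norm_smul, Real.norm_eq_abs, abs_of_pos (inv_pos.2 hR)]
    unfold tailf
    rw [hn]
    have hiff : 1 ≤ R⁻¹ * ‖x‖ ↔ R ≤ ‖x‖ := by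
      rw [inv_mul_eq_div, le_div_iff₀ hR, one_mul]
    by_cases hx : R ≤ ‖x‖
    · rw [if_pos (hiff.2 hx), if_pos hx]
      rw [Real.mul_rpow (by positivity) (norm_nonneg x),
        Real.inv_rpow hR.le, Real.rpow_neg hR.le, inv_inv]
    · rw [if_neg (fun hh => hx (hiff.1 hh)), if_neg hx, mul_zero]
  simp_rw [heq] at h
  rw [MeasureTheory.integral_const_mul] at h
  have h4 : (R : ℝ) ^ (Module.finrank ℝ M4) = R ^ (4 : ℝ) := by
    rw [finrank_euclideanSpace_fin, ← Real.rpow_natCast]; norm_num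
  rw [smul_eq_mul, h4] at h
  have hRs : (0 : ℝ) < R ^ s := Real.rpow_pos_of_pos hR s
  have : ∫ x : M4, tailf s R x = R ^ (4 : ℝ) * (∫ x : M4, tailf s 1 x) / R ^ s := by
    rw [eq_div_iff hRs.ne']; linarith [h]
  rw [this, Real.rpow_neg hR.le]
  ring

lemma Dkappa_cont {lam κ : ℝ} (hlam : 0 < lam) (a : M4) :
    Continuous fun x : M4 => Dkappa lam κ (x + a) := by
  have hfun : (fun x : M4 => Dkappa lam κ (x + a))
      = fun x : M4 => (lam / (lam + gD (x + a))) ^ κ :=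
    funext fun x => Dkappa_eq κ hlam (x + a)
  rw [hfun]
  have hc : ∀ i : Fin 4, Continuous fun x : M4 => (x + a) i := by
    intro i
    have : Continuous fun y : M4 => y i := (EuclideanSpace.proj i).continuous
    exact this.comp (continuous_id.add continuous_const)
  have hsn : Continuous fun x : M4 => snorm3 (x + a) := by
    apply Real.continuous_sqrt.comp
    exact (((hc 1).pow 2).add ((hc 2).pow 2)).add ((hc 3).pow 2)
  have hgD : Continuous fun x : M4 => gD (x + a) :=
    (hsn.sub (hc 0).abs).max continuous_const
  apply Continuous.rpow_const
  · exact continuous_const.div (continuous_const.add hgD)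
      (fun x => (fD_pos hlam (x + a)).ne')
  · exact fun x => Or.inl (div_pos hlam (fD_pos hlam (x + a))).ne'

lemma keyf_integrable {lam κ r : ℝ} (hlam : 0 < lam) (hκ : 0 < κ) (hr : 4 + κ ≤ r)
    (a : M4) :
    Integrable (fun x : M4 => (lam + ‖x‖) ^ (-r) * Dkappa lam κ (x + a)) := by
  refine (integrable_pow hlam (by linarith : (4:ℝ) < r)).mono'
    (((cont_base lam r hlam).mul (Dkappa_cont hlam a)).aestronglyMeasurable) ?_
  filter_upwards with x
  have h1 : 0 < lam + ‖x‖ := by positivity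
  have h2 : 0 ≤ (lam + ‖x‖) ^ (-r) := Real.rpow_nonneg h1.le _
  rw [Real.norm_eq_abs, abs_of_nonneg (mul_nonneg h2 (Dkappa_nonneg hlam _))]
  calc (lam + ‖x‖) ^ (-r) * Dkappa lam κ (x + a)
      ≤ (lam + ‖x‖) ^ (-r) * 1 :=
        mul_le_mul_of_nonneg_left (Dkappa_le_one hlam hκ _) h2
    _ = (lam + ‖x‖) ^ (-r) := mul_one _

lemma key_integral {lam κ r : ℝ} (hlam : 0 < lam) (hκ : 0 < κ) (hr : 4 + κ ≤ r)
    (a : M4) :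
    ∫ x : M4, (lam + ‖x‖) ^ (-r) * Dkappa lam κ (x + a)
      ≤ (2 ^ κ * (∫ x : M4, (lam + ‖x‖) ^ (-r))
          + lam ^ (4 - r) * 4 ^ κ * (∫ x : M4, tailf (4 + κ) 1 x))
        * Dkappa lam κ a := by
  set t := lam + gD a with ht
  have htpos : 0 < t := fD_pos hlam a
  have hR : 0 < t / 4 := by linarith
  have hpt : ∀ x : M4, (lam + ‖x‖) ^ (-r) * Dkappa lam κ (x + a)
      ≤ 2 ^ κ * Dkappa lam κ a * (lam + ‖x‖) ^ (-r)
        + lam ^ (4 + κ - r) * tailf (4 + κ) (t / 4) x := by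
    intro x
    have h1 : 0 < lam + ‖x‖ := by positivity
    have h2 : 0 ≤ (lam + ‖x‖) ^ (-r) := Real.rpow_nonneg h1.le _
    rcases lt_or_ge ‖x‖ (t / 4) with hx | hx
    · have hsm := Dkappa_smallx hlam hκ a x hx.le
      have h0 : tailf (4 + κ) (t / 4) x = 0 := if_neg (not_le.2 hx)
      rw [h0, mul_zero, add_zero]
      calc (lam + ‖x‖) ^ (-r) * Dkappa lam κ (x + a)
          ≤ (lam + ‖x‖) ^ (-r) * (2 ^ κ * Dkappa lam κ a) :=
            mul_le_mul_of_nonneg_left hsm h2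
        _ = 2 ^ κ * Dkappa lam κ a * (lam + ‖x‖) ^ (-r) := by ring
    · have h0 : 0 < ‖x‖ := lt_of_lt_of_le hR hx
      have htail : tailf (4 + κ) (t / 4) x = ‖x‖ ^ (-(4 + κ)) := if_pos hx
      have hsplit : (lam + ‖x‖) ^ (-r)
          = (lam + ‖x‖) ^ (-(4 + κ)) * (lam + ‖x‖) ^ (4 + κ - r) := by
        rw [← Real.rpow_add h1]; ring_nf
      have hA : (lam + ‖x‖) ^ (-(4 + κ)) ≤ ‖x‖ ^ (-(4 + κ)) :=
        Real.rpow_le_rpow_of_nonpos h0 (le_add_of_nonneg_left hlam.le)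
          (by linarith)
      have hB : (lam + ‖x‖) ^ (4 + κ - r) ≤ lam ^ (4 + κ - r) :=
        Real.rpow_le_rpow_of_nonpos hlam (le_add_of_nonneg_right (norm_nonneg x))
          (by linarith)
      have hfirst : 0 ≤ 2 ^ κ * Dkappa lam κ a * (lam + ‖x‖) ^ (-r) := by
        have := Dkappa_nonneg (κ := κ) hlam a
        positivity
      have hmain : (lam + ‖x‖) ^ (-r) * Dkappa lam κ (x + a)
          ≤ lam ^ (4 + κ - r) * tailf (4 + κ) (t / 4) x := by
        rw [htail]
        calc (lam + ‖x‖) ^ (-r) * Dkappa lam κ (x + a)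
            ≤ (lam + ‖x‖) ^ (-r) * 1 :=
              mul_le_mul_of_nonneg_left (Dkappa_le_one hlam hκ _) h2
          _ = (lam + ‖x‖) ^ (-(4 + κ)) * (lam + ‖x‖) ^ (4 + κ - r) := by
              rw [mul_one, hsplit]
          _ ≤ ‖x‖ ^ (-(4 + κ)) * lam ^ (4 + κ - r) := by
              apply mul_le_mul hA hB (Real.rpow_nonneg h1.le _)
                (Real.rpow_nonneg (norm_nonneg x) _)
          _ = lam ^ (4 + κ - r) * ‖x‖ ^ (-(4 + κ)) := by ring
      linarith
  have hint1 : Integrable (fun x : M4 =>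
      2 ^ κ * Dkappa lam κ a * (lam + ‖x‖) ^ (-r)) :=
    (integrable_pow hlam (by linarith : (4:ℝ) < r)).const_mul _
  have hint2 : Integrable (fun x : M4 =>
      lam ^ (4 + κ - r) * tailf (4 + κ) (t / 4) x) :=
    (tailf_integrable (by linarith : (4:ℝ) < 4 + κ) hR).const_mul _
  have hmono := integral_mono (keyf_integrable hlam hκ hr a) (hint1.add hint2) hpt
  simp only [Pi.add_apply] at hmono
  rw [integral_add hint1 hint2, integral_const_mul, integral_const_mul,
    tailf_scale (4 + κ) hR] at hmono
  -- now rewrite the tail factor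
  have htexp : (t / 4) ^ (4:ℝ) * (t / 4) ^ (-(4 + κ)) = (t / 4) ^ (-κ) := by
    rw [← Real.rpow_add hR]; ring_nf
  have hDa : Dkappa lam κ a = lam ^ κ * t ^ (-κ) := by
    rw [Dkappa_eq κ hlam, ← ht, Real.div_rpow hlam.le htpos.le,
      Real.rpow_neg htpos.le, div_eq_mul_inv]
  have ht4 : (t / 4) ^ (-κ) = t ^ (-κ) * 4 ^ κ := by
    rw [Real.div_rpow htpos.le (by norm_num : (0:ℝ) ≤ 4),
      Real.rpow_neg (by norm_num : (0:ℝ) ≤ 4)]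
    field_simp
  have hlamexp : lam ^ (4 + κ - r) = lam ^ (4 - r) * lam ^ κ := by
    rw [← Real.rpow_add hlam]; ring_nf
  calc ∫ x : M4, (lam + ‖x‖) ^ (-r) * Dkappa lam κ (x + a)
      ≤ 2 ^ κ * Dkappa lam κ a * (∫ x : M4, (lam + ‖x‖) ^ (-r))
        + lam ^ (4 + κ - r) * ((t / 4) ^ (4:ℝ) * (t / 4) ^ (-(4 + κ))
            * ∫ x : M4, tailf (4 + κ) 1 x) := by
        convert hmono using 3 <;> ring
    _ = (2 ^ κ * (∫ x : M4, (lam + ‖x‖) ^ (-r))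
          + lam ^ (4 - r) * 4 ^ κ * (∫ x : M4, tailf (4 + κ) 1 x))
        * Dkappa lam κ a := by
        rw [htexp, ht4, hlamexp, hDa]
        ring

/-- Stability of the `κ`-type condition under smearing (Lemma `stability` (i)):
if `‖[B₁, B₂(a)]‖ ≤ c·D_κ(a)` and `|χ(x)| ≤ C·(λ+|x|)^{−r}` with `r ≥ 4 + κ`, then
the commutator of `B₁` with the smeared operator `B₂(χ)` is again of `κ`-type. -/
theorem stmt2 {H : Type*} [NormedAddCommGroup H] [InnerProductSpace ℂ H] [CompleteSpace H]
    (lam κ : ℝ) (hlam : 0 < lam) (hκ : 0 < κ)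
    (U : M4 → H →L[ℂ] H)
    (hU0 : U 0 = 1) (hUadd : ∀ x y, U (x + y) = U x * U y)
    (hUadj : ∀ x, adjoint (U x) = U (-x)) (hUcont : ∀ ψ : H, Continuous fun x => U x ψ)
    (B₁ B₂ : H →L[ℂ] H) (c : ℝ)
    (hcomm : ∀ a : M4, ‖B₁ * (U a * B₂ * U (-a)) - (U a * B₂ * U (-a)) * B₁‖
        ≤ c * Dkappa lam κ a)
    (χ : M4 → ℂ) (hχm : Measurable χ) (C r : ℝ) (hr : 4 + κ ≤ r)
    (hχb : ∀ x : M4, ‖χ x‖ ≤ C * (lam + ‖x‖) ^ (-r))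
    (Bχ : H →L[ℂ] H)
    (hBχ : ∀ ψ : H, Bχ ψ = ∫ x : M4, χ x • ((U x * B₂ * U (-x)) ψ)) :
    ∃ c' : ℝ, ∀ a : M4,
      ‖B₁ * (U a * Bχ * U (-a)) - (U a * Bχ * U (-a)) * B₁‖ ≤ c' * Dkappa lam κ a := by
  -- nonnegativity of the constants
  have hC : 0 ≤ C := by
    have h0 := (norm_nonneg (χ 0)).trans (hχb 0)
    have hp : (0:ℝ) < (lam + ‖(0:M4)‖) ^ (-r) := by
      have : (0:ℝ) < lam + ‖(0:M4)‖ := by positivity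
      exact Real.rpow_pos_of_pos this _
    nlinarith
  have hc : 0 ≤ c := by
    have h1 := (norm_nonneg _).trans (hcomm 0)
    nlinarith [Dkappa_pos (κ := κ) hlam (0 : M4)]
  -- unitarity
  have hUmul : ∀ x y : M4, U x * U y = U (x + y) := fun x y => (hUadd x y).symm
  have hUinv : ∀ x : M4, U (-x) * U x = 1 := by
    intro x; rw [hUmul, neg_add_cancel, hU0]
  have hUnorm : ∀ (x : M4) (ψ : H), ‖U x ψ‖ = ‖ψ‖ := by
    intro x ψ
    have hinner : inner ℂ (U x ψ) (U x ψ) = inner ℂ ψ ψ := by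
      have h1 : inner ℂ (U x ψ) (U x ψ) = inner ℂ ψ (adjoint (U x) (U x ψ)) :=
        (ContinuousLinearMap.adjoint_inner_right (U x) ψ (U x ψ)).symm
      rw [h1, hUadj]
      have h2 : U (-x) (U x ψ) = ψ := by
        rw [← ContinuousLinearMap.mul_apply, hUinv, ContinuousLinearMap.one_apply]
      rw [h2]
    rw [norm_eq_sqrt_re_inner (𝕜 := ℂ) (U x ψ), norm_eq_sqrt_re_inner (𝕜 := ℂ) ψ, hinner]
  -- conjugated operators
  set Bop : M4 → (H →L[ℂ] H) := fun y => U y * B₂ * U (-y) with hBop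
  have hBopnorm : ∀ (y : M4) (ψ : H), ‖Bop y ψ‖ ≤ ‖B₂‖ * ‖ψ‖ := by
    intro y ψ
    calc ‖Bop y ψ‖ = ‖U y (B₂ (U (-y) ψ))‖ := rfl
      _ = ‖B₂ (U (-y) ψ)‖ := hUnorm _ _
      _ ≤ ‖B₂‖ * ‖U (-y) ψ‖ := B₂.le_opNorm _
      _ = ‖B₂‖ * ‖ψ‖ := by rw [hUnorm]
  -- strong continuity of the conjugated operators
  have hBopcont : ∀ ψ : H, Continuous fun x : M4 => Bop x ψ := by
    intro ψ
    have hφ : Continuous fun x : M4 => B₂ (U (-x) ψ) :=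
      B₂.continuous.comp ((hUcont ψ).comp continuous_neg)
    rw [continuous_iff_continuousAt]
    intro x₀
    rw [ContinuousAt, tendsto_iff_norm_sub_tendsto_zero]
    have hbound : ∀ x : M4, ‖Bop x ψ - Bop x₀ ψ‖
        ≤ ‖B₂ (U (-x) ψ) - B₂ (U (-x₀) ψ)‖ + ‖U x (B₂ (U (-x₀) ψ)) - U x₀ (B₂ (U (-x₀) ψ))‖ := by
      intro x
      have hsplit : Bop x ψ - Bop x₀ ψ
          = U x (B₂ (U (-x) ψ) - B₂ (U (-x₀) ψ))
            + (U x (B₂ (U (-x₀) ψ)) - U x₀ (B₂ (U (-x₀) ψ))) := by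
        simp only [hBop, ContinuousLinearMap.mul_apply, map_sub]
        abel
      rw [hsplit]
      refine (norm_add_le _ _).trans ?_
      rw [hUnorm]
    have h1 : Filter.Tendsto (fun x : M4 => ‖B₂ (U (-x) ψ) - B₂ (U (-x₀) ψ)‖
        + ‖U x (B₂ (U (-x₀) ψ)) - U x₀ (B₂ (U (-x₀) ψ))‖) (nhds x₀) (nhds 0) := by
      have ha : Filter.Tendsto (fun x : M4 => ‖B₂ (U (-x) ψ) - B₂ (U (-x₀) ψ)‖)
          (nhds x₀) (nhds 0) := by
        have h' : Filter.Tendsto (fun x : M4 => B₂ (U (-x) ψ) - B₂ (U (-x₀) ψ))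
            (nhds x₀) (nhds 0) := by
          have := (hφ.tendsto x₀).sub (tendsto_const_nhds (x := B₂ (U (-x₀) ψ)))
          simpa using this
        simpa using h'.norm
      have hb : Filter.Tendsto (fun x : M4 => ‖U x (B₂ (U (-x₀) ψ)) - U x₀ (B₂ (U (-x₀) ψ))‖)
          (nhds x₀) (nhds 0) := by
        have h' : Filter.Tendsto (fun x : M4 => U x (B₂ (U (-x₀) ψ)) - U x₀ (B₂ (U (-x₀) ψ)))
            (nhds x₀) (nhds 0) := by
          have := ((hUcont (B₂ (U (-x₀) ψ))).tendsto x₀).sub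
            (tendsto_const_nhds (x := U x₀ (B₂ (U (-x₀) ψ))))
          simpa using this
        simpa using h'.norm
      simpa using ha.add hb
    exact squeeze_zero (fun x => norm_nonneg _) hbound h1
  -- conjugation identity
  have hconj : ∀ a x : M4, U a * Bop x * U (-a) = Bop (x + a) := by
    intro a x
    have h1 : U a * U x = U (x + a) := by rw [hUmul, add_comm]
    have h2 : U (-x) * U (-a) = U (-(x + a)) := by
      rw [hUmul]; congr 1; abel
    calc U a * Bop x * U (-a) = U a * U x * B₂ * (U (-x) * U (-a)) := by
          simp only [hBop, mul_assoc]
      _ = U (x + a) * B₂ * U (-(x + a)) := by rw [h1, h2]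
  -- integrability of the basic integrand
  have hint : ∀ (a : M4) (ψ : H), Integrable (fun x : M4 => χ x • (Bop (x + a) ψ)) := by
    intro a ψ
    have hmeas : AEStronglyMeasurable (fun x : M4 => χ x • (Bop (x + a) ψ)) volume := by
      apply AEStronglyMeasurable.smul hχm.aestronglyMeasurable
      exact ((hBopcont ψ).comp (continuous_id.add continuous_const)).aestronglyMeasurable
    refine ((integrable_pow hlam (by linarith : (4:ℝ) < r)).const_mul
      (C * (‖B₂‖ * ‖ψ‖))).mono' hmeas ?_
    filter_upwards with x
    rw [norm_smul]
    calc ‖χ x‖ * ‖Bop (x + a) ψ‖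
        ≤ (C * (lam + ‖x‖) ^ (-r)) * (‖B₂‖ * ‖ψ‖) :=
          mul_le_mul (hχb x) (hBopnorm _ _) (norm_nonneg _)
            (by positivity)
      _ = C * (‖B₂‖ * ‖ψ‖) * (lam + ‖x‖) ^ (-r) := by ring
  have hint0 : ∀ ψ : H, Integrable (fun x : M4 => χ x • (Bop x ψ)) := by
    intro ψ
    have := hint 0 ψ
    simpa using this
  -- smeared conjugation identity
  have hkey : ∀ (a : M4) (ψ : H),
      (U a * Bχ * U (-a)) ψ = ∫ x : M4, χ x • (Bop (x + a) ψ) := by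
    intro a ψ
    have h1 : (U a * Bχ * U (-a)) ψ = U a (Bχ (U (-a) ψ)) := rfl
    rw [h1, hBχ (U (-a) ψ),
      ← ContinuousLinearMap.integral_comp_comm (U a) (hint0 (U (-a) ψ))]
    congr 1
    funext x
    rw [_root_.map_smul]
    congr 1
    calc U a ((U x * B₂ * U (-x)) (U (-a) ψ)) = (U a * Bop x * U (-a)) ψ := rfl
      _ = Bop (x + a) ψ := by rw [hconj]
  -- the constant
  set I := ∫ x : M4, (lam + ‖x‖) ^ (-r) with hI
  set J := ∫ x : M4, tailf (4 + κ) 1 x with hJ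
  have hInn : 0 ≤ I := integral_nonneg (fun x => Real.rpow_nonneg (by positivity) _)
  have hJnn : 0 ≤ J := integral_nonneg (fun x => tailf_nonneg _ _ x)
  set K := 2 ^ κ * I + lam ^ (4 - r) * 4 ^ κ * J with hK
  have hKnn : 0 ≤ K := by positivity
  refine ⟨c * C * K, fun a => ?_⟩
  apply ContinuousLinearMap.opNorm_le_bound _
    (mul_nonneg (mul_nonneg (mul_nonneg hc hC) hKnn) (Dkappa_nonneg hlam a))
  intro ψ
  have hintB : Integrable (fun x : M4 => B₁ (χ x • (Bop (x + a) ψ))) :=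
    B₁.integrable_comp (hint a ψ)
  have hw1 : (B₁ * (U a * Bχ * U (-a)) - (U a * Bχ * U (-a)) * B₁) ψ
      = ∫ x : M4, χ x • ((B₁ * Bop (x + a) - Bop (x + a) * B₁) ψ) := by
    have e1 : (B₁ * (U a * Bχ * U (-a)) - (U a * Bχ * U (-a)) * B₁) ψ
        = B₁ ((U a * Bχ * U (-a)) ψ) - (U a * Bχ * U (-a)) (B₁ ψ) := by
      simp [ContinuousLinearMap.sub_apply, ContinuousLinearMap.mul_apply]
    rw [e1, hkey a ψ, hkey a (B₁ ψ),
      ← ContinuousLinearMap.integral_comp_comm B₁ (hint a ψ),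
      ← integral_sub hintB (hint a (B₁ ψ))]
    congr 1
    funext x
    simp only [_root_.map_smul, ContinuousLinearMap.sub_apply,
      ContinuousLinearMap.mul_apply, smul_sub]
  rw [hw1]
  have hmaj : ∀ x : M4, ‖χ x • ((B₁ * Bop (x + a) - Bop (x + a) * B₁) ψ)‖
      ≤ (c * C * ‖ψ‖) * ((lam + ‖x‖) ^ (-r) * Dkappa lam κ (x + a)) := by
    intro x
    rw [norm_smul]
    have hp : (0:ℝ) ≤ (lam + ‖x‖) ^ (-r) := Real.rpow_nonneg (by positivity) _
    calc ‖χ x‖ * ‖(B₁ * Bop (x + a) - Bop (x + a) * B₁) ψ‖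
        ≤ (C * (lam + ‖x‖) ^ (-r)) * (‖B₁ * Bop (x + a) - Bop (x + a) * B₁‖ * ‖ψ‖) :=
          mul_le_mul (hχb x) ((B₁ * Bop (x + a) - Bop (x + a) * B₁).le_opNorm ψ)
            (norm_nonneg _) (by positivity)
      _ ≤ (C * (lam + ‖x‖) ^ (-r)) * ((c * Dkappa lam κ (x + a)) * ‖ψ‖) := by
          apply mul_le_mul_of_nonneg_left
            (mul_le_mul_of_nonneg_right (hcomm (x + a)) (norm_nonneg ψ))
            (by positivity)
      _ = (c * C * ‖ψ‖) * ((lam + ‖x‖) ^ (-r) * Dkappa lam κ (x + a)) := by ring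
  calc ‖∫ x : M4, χ x • ((B₁ * Bop (x + a) - Bop (x + a) * B₁) ψ)‖
      ≤ ∫ x : M4, (c * C * ‖ψ‖) * ((lam + ‖x‖) ^ (-r) * Dkappa lam κ (x + a)) :=
        norm_integral_le_of_norm_le
          ((keyf_integrable hlam hκ hr a).const_mul (c * C * ‖ψ‖))
          (Filter.Eventually.of_forall hmaj)
    _ = (c * C * ‖ψ‖) * ∫ x : M4, (lam + ‖x‖) ^ (-r) * Dkappa lam κ (x + a) :=
        integral_const_mul _ _
    _ ≤ (c * C * ‖ψ‖) * (K * Dkappa lam κ a) :=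
        mul_le_mul_of_nonneg_left (key_integral hlam hκ hr a) (by positivity)
    _ = c * C * K * Dkappa lam κ a * ‖ψ‖ := by ring
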